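/- arXiv:math/0109127 — 3 statements merged into one kernel-verified Lean document; each statement's English description precedes it below -/
import Mathlib

section
/- Let p, q, r be distinct primes and B a finite set of integers with |B| = pqr, contained in the union of axes [*,0,0] ∪ [0,*,0] ∪ [0,0,*] (mod p, q, r) with constant positive counts x, y, z on the nonzero positions of each axis and count t at the origin. Then at most one of Φ_{pq}(x), Φ_{qr}(x), Φ_{pr}(x) can divide B(x). -/
open Finset

-- η^m (zpow) equals η^((m : ZMod n).val)
lemma zpow_int_eq_pow_val {η : ℂ} (hη0 : η ≠ 0) (n : ℕ) [NeZero n] (h1 : η ^ n = 1) (m : ℤ) :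
    η ^ m = η ^ ((m : ZMod n)).val := by
  have hval : (((m : ZMod n)).val : ℤ) = m % n := ZMod.val_intCast m
  have hm : m = (n : ℤ) * (m / n) + m % n := (Int.mul_ediv_add_emod m n).symm
  calc η ^ m = η ^ ((n:ℤ) * (m / n) + m % n) := by rw [← hm]
    _ = (η ^ (n:ℤ)) ^ (m / n) * η ^ (m % n) := by rw [zpow_add₀ hη0, zpow_mul]
    _ = η ^ (m % n) := by rw [zpow_natCast, h1, one_zpow, one_mul]
    _ = η ^ ((m : ZMod n)).val := by rw [← hval, zpow_natCast]

lemma card_filter_modclasses (n : ℕ) (hn : 1 < n) (B : Finset ℤ) (P : ℤ → Prop)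
    [DecidablePred P] (w : ℕ)
    (h : ∀ i : ℤ, ¬ (n:ℤ) ∣ i → (B.filter fun b => P b ∧ b ≡ i [ZMOD (n:ℤ)]).card = w) :
    (B.filter fun b => P b ∧ ¬ (n:ℤ) ∣ b).card = (n - 1) * w := by
  haveI : NeZero n := ⟨by omega⟩
  have hmaps : ∀ b ∈ B.filter fun b => P b ∧ ¬ (n:ℤ) ∣ b,
      (b : ZMod n) ∈ (univ \ {0} : Finset (ZMod n)) := by
    intro b hb
    simp only [mem_filter] at hb
    simp only [mem_sdiff, mem_univ, mem_singleton, true_and]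
    simpa [ZMod.intCast_zmod_eq_zero_iff_dvd] using hb.2.2
  rw [Finset.card_eq_sum_card_fiberwise hmaps]
  have hfib : ∀ k ∈ (univ \ {0} : Finset (ZMod n)),
      ((B.filter fun b => P b ∧ ¬ (n:ℤ) ∣ b).filter fun b : ℤ => ((b : ZMod n) = k)).card = w := by
    intro k hk
    have hk0 : k ≠ 0 := by simpa using (Finset.mem_sdiff.mp hk).2
    have hcast : (((k.val : ℤ)) : ZMod n) = k := by
      push_cast
      simp [ZMod.natCast_val, ZMod.cast_id]
    have hknd : ¬ (n:ℤ) ∣ (k.val : ℤ) := by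
      rw [← ZMod.intCast_zmod_eq_zero_iff_dvd, hcast]
      exact hk0
    rw [← h (k.val : ℤ) hknd]
    rw [filter_filter]
    congr 1
    apply Finset.filter_congr
    intro b _
    constructor
    · rintro ⟨⟨hP, _⟩, hbk⟩
      refine ⟨hP, ?_⟩
      rw [← ZMod.intCast_eq_intCast_iff, hcast, hbk]
    · rintro ⟨hP, hmod⟩
      have hbk : (b : ZMod n) = k := by
        rw [← hcast, ZMod.intCast_eq_intCast_iff]; exact hmod
      refine ⟨⟨hP, ?_⟩, hbk⟩
      rw [← ZMod.intCast_zmod_eq_zero_iff_dvd, hbk]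
      exact hk0
  rw [Finset.sum_congr rfl hfib, Finset.sum_const, smul_eq_mul]
  congr 1
  rw [Finset.card_sdiff_of_subset (by simp), Finset.card_univ, ZMod.card, Finset.card_singleton]

lemma zpow_int_eq_pow_val' {η : ℂ} (hη0 : η ≠ 0) (n : ℕ) [NeZero n] (h1 : η ^ n = 1) (m : ℤ) :
    η ^ m = η ^ ((m : ZMod n)).val := by
  have hval : (((m : ZMod n)).val : ℤ) = m % n := ZMod.val_intCast m
  have hm : m = (n : ℤ) * (m / n) + m % n := (Int.mul_ediv_add_emod m n).symm
  calc η ^ m = η ^ ((n:ℤ) * (m / n) + m % n) := by rw [← hm]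
    _ = (η ^ (n:ℤ)) ^ (m / n) * η ^ (m % n) := by rw [zpow_add₀ hη0, zpow_mul]
    _ = η ^ (m % n) := by rw [zpow_natCast, h1, one_zpow, one_mul]
    _ = η ^ ((m : ZMod n)).val := by rw [← hval, zpow_natCast]

lemma sum_zpow_modclasses (n : ℕ) (hnp : n.Prime) (d : ℕ) (hd : ¬ n ∣ d)
    (ξ : ℂ) (hξ0 : ξ ≠ 0) (hξn : IsPrimitiveRoot (ξ ^ d) n)
    (B : Finset ℤ) (P : ℤ → Prop) [DecidablePred P] (w : ℕ)
    (hPd : ∀ b, P b → (d:ℤ) ∣ b)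
    (h : ∀ i : ℤ, ¬ (n:ℤ) ∣ i → (B.filter fun b => P b ∧ b ≡ i [ZMOD (n:ℤ)]).card = w) :
    ∑ b ∈ B.filter (fun b => P b ∧ ¬ (n:ℤ) ∣ b), ξ ^ b = -(w:ℂ) := by
  haveI : NeZero n := ⟨hnp.ne_zero⟩
  haveI : Fact n.Prime := ⟨hnp⟩
  set η : ℂ := ξ ^ d with hηdef
  have hη0 : η ≠ 0 := pow_ne_zero _ hξ0
  have h1 : η ^ n = 1 := hξn.pow_eq_one
  have hdu : ((d : ZMod n)) ≠ 0 := by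
    rw [Ne, ZMod.natCast_eq_zero_iff]; exact hd
  set c : ZMod n := ((d : ZMod n))⁻¹ with hcdef
  have hc0 : c ≠ 0 := inv_ne_zero hdu
  set F : ZMod n → ℂ := fun k => η ^ ((k * c).val) with hFdef
  set s := B.filter (fun b => P b ∧ ¬ (n:ℤ) ∣ b) with hsdef
  -- pointwise
  have hpt : ∀ b ∈ s, ξ ^ b = F ((b : ZMod n)) := by
    intro b hb
    rw [hsdef, mem_filter] at hb
    obtain ⟨m, rfl⟩ := hPd b hb.2.1
    have h1' : ξ ^ ((d:ℤ) * m) = η ^ m := by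
      rw [zpow_mul, zpow_natCast]
    have h2' : (((d:ℤ) * m : ℤ) : ZMod n) * c = ((m : ℤ) : ZMod n) := by
      push_cast
      rw [mul_comm ((d : ZMod n)) ((m:ℤ) : ZMod n), mul_assoc, hcdef,
        mul_inv_cancel₀ hdu, mul_one]
    rw [h1', hFdef]
    simp only
    rw [h2']
    exact zpow_int_eq_pow_val' hη0 n h1 m
  rw [Finset.sum_congr rfl hpt]
  rw [← Finset.sum_fiberwise_of_maps_to (g := fun b : ℤ => ((b : ZMod n)))
    (fun b _ => mem_univ _) (fun b : ℤ => F ((b : ZMod n)))]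
  have hinner : ∀ k : ZMod n,
      ∑ b ∈ s.filter (fun b : ℤ => ((b : ZMod n) = k)), F ((b : ZMod n))
        = (s.filter (fun b : ℤ => ((b : ZMod n) = k))).card • F k := by
    intro k
    rw [← Finset.sum_const]
    apply Finset.sum_congr rfl
    intro b hb
    rw [(Finset.mem_filter.mp hb).2]
  -- fiber cards
  have hfib0 : s.filter (fun b : ℤ => ((b : ZMod n) = 0)) = ∅ := by
    rw [Finset.eq_empty_iff_forall_notMem]
    intro b hb
    rw [Finset.mem_filter, hsdef, Finset.mem_filter] at hb
    exact hb.1.2.2 ((ZMod.intCast_zmod_eq_zero_iff_dvd b n).mp hb.2)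
  have hfib : ∀ k : ZMod n, k ≠ 0 → (s.filter (fun b : ℤ => ((b : ZMod n) = k))).card = w := by
    intro k hk0
    have hcast : (((k.val : ℤ)) : ZMod n) = k := by
      push_cast; simp [ZMod.natCast_val, ZMod.cast_id]
    have hknd : ¬ (n:ℤ) ∣ (k.val : ℤ) := by
      rw [← ZMod.intCast_zmod_eq_zero_iff_dvd, hcast]; exact hk0
    rw [← h (k.val : ℤ) hknd, hsdef, filter_filter]
    congr 1
    apply Finset.filter_congr
    intro b _
    constructor
    · rintro ⟨⟨hP, _⟩, hbk⟩
      exact ⟨hP, by rw [← ZMod.intCast_eq_intCast_iff, hcast, hbk]⟩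
    · rintro ⟨hP, hmod⟩
      have hbk : (b : ZMod n) = k := by
        rw [← hcast, ZMod.intCast_eq_intCast_iff]; exact hmod
      exact ⟨⟨hP, by rw [← ZMod.intCast_zmod_eq_zero_iff_dvd, hbk]; exact hk0⟩, hbk⟩
  rw [Finset.sum_congr rfl (fun k _ => hinner k)]
  rw [Finset.sum_eq_sum_sdiff_singleton_add (mem_univ (0 : ZMod n))
    (fun k => (s.filter (fun b : ℤ => ((b : ZMod n) = k))).card • F k)]
  rw [hfib0]
  simp only [Finset.card_empty, zero_smul, add_zero]
  have hww : ∀ k ∈ (univ \ {0} : Finset (ZMod n)),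
      (s.filter (fun b : ℤ => ((b : ZMod n) = k))).card • F k = (w:ℂ) * F k := by
    intro k hk
    have hk0 : k ≠ 0 := by simpa using (Finset.mem_sdiff.mp hk).2
    rw [hfib k hk0, nsmul_eq_mul]
  rw [Finset.sum_congr rfl hww, ← Finset.mul_sum]
  -- ∑ over all k of F k = 0
  have hFsum : ∑ k ∈ (univ : Finset (ZMod n)), F k = 0 := by
    have hbij : ∑ k : ZMod n, F k = ∑ k : ZMod n, η ^ (k.val) := by
      apply Fintype.sum_equiv (Equiv.mulRight₀ c hc0)
      intro k
      rfl
    rw [hbij]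
    have hrange : ∑ k : ZMod n, η ^ (k.val) = ∑ i ∈ range n, η ^ i := by
      apply Finset.sum_nbij' (fun k : ZMod n => k.val) (fun i : ℕ => (i : ZMod n))
      · intro k _; exact mem_range.mpr (ZMod.val_lt k)
      · intro i _; exact mem_univ _
      · intro k _; exact ZMod.natCast_rightInverse k
      · intro i hi; exact ZMod.val_cast_of_lt (mem_range.mp hi)
      · intro k _; rfl
    rw [hrange]
    exact hξn.geom_sum_eq_zero hnp.one_lt
  have hF0 : F 0 = 1 := by
    rw [hFdef]
    simp only [zero_mul, ZMod.val_zero, pow_zero]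
  have hsd : ∑ k ∈ (univ \ {0} : Finset (ZMod n)), F k
      = ∑ k ∈ (univ : Finset (ZMod n)), F k - ∑ k ∈ ({0} : Finset (ZMod n)), F k :=
    Finset.sum_sdiff_eq_sub (by simp)
  rw [hsd, hFsum, Finset.sum_singleton, hF0]
  ring

lemma key_eq (p q r : ℕ) (hp : p.Prime) (hq : q.Prime) (hr : r.Prime)
    (hpq : p ≠ q) (hpr : p ≠ r) (hqr : q ≠ r)
    (B : Finset ℤ) (t x y z : ℕ)
    (haxes : ∀ b ∈ B,
      ((q : ℤ) ∣ b ∧ (r : ℤ) ∣ b) ∨ ((p : ℤ) ∣ b ∧ (r : ℤ) ∣ b) ∨ ((p : ℤ) ∣ b ∧ (q : ℤ) ∣ b))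
    (ht : (B.filter (fun b => (p : ℤ) ∣ b ∧ (q : ℤ) ∣ b ∧ (r : ℤ) ∣ b)).card = t)
    (hx : ∀ i : ℤ, ¬ (p : ℤ) ∣ i →
      (B.filter (fun b => b ≡ i [ZMOD (p : ℤ)] ∧ (q : ℤ) ∣ b ∧ (r : ℤ) ∣ b)).card = x)
    (hy : ∀ j : ℤ, ¬ (q : ℤ) ∣ j →
      (B.filter (fun b => (p : ℤ) ∣ b ∧ b ≡ j [ZMOD (q : ℤ)] ∧ (r : ℤ) ∣ b)).card = y)
    (hz : ∀ k : ℤ, ¬ (r : ℤ) ∣ k →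
      (B.filter (fun b => (p : ℤ) ∣ b ∧ (q : ℤ) ∣ b ∧ b ≡ k [ZMOD (r : ℤ)])).card = z)
    (hvan : ∀ ξ : ℂ, IsPrimitiveRoot ξ (p * q) → ∑ b ∈ B, ξ ^ b = 0) :
    x + y + z = r * z + t := by
  have hpq0 : p * q ≠ 0 := Nat.mul_ne_zero hp.ne_zero hq.ne_zero
  obtain ⟨ξ, hξ⟩ : ∃ ξ : ℂ, IsPrimitiveRoot ξ (p * q) :=
    ⟨_, Complex.isPrimitiveRoot_exp (p * q) hpq0⟩
  have hξ0 : ξ ≠ 0 := hξ.ne_zero hpq0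
  -- the three pieces
  have hsplit1 : ∑ b ∈ B, ξ ^ b
      = ∑ b ∈ B.filter (fun b => (p:ℤ) ∣ b), ξ ^ b
        + ∑ b ∈ B.filter (fun b => ¬ (p:ℤ) ∣ b), ξ ^ b :=
    (Finset.sum_filter_add_sum_filter_not B _ _).symm
  have hsplit2 : ∑ b ∈ B.filter (fun b => (p:ℤ) ∣ b), ξ ^ b
      = ∑ b ∈ B.filter (fun b => (p:ℤ) ∣ b ∧ (q:ℤ) ∣ b), ξ ^ b
        + ∑ b ∈ B.filter (fun b => (p:ℤ) ∣ b ∧ ¬ (q:ℤ) ∣ b), ξ ^ b := by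
    rw [← Finset.sum_filter_add_sum_filter_not (B.filter (fun b => (p:ℤ) ∣ b))
      (fun b => (q:ℤ) ∣ b), filter_filter, filter_filter]
  -- Sz sum
  have hcop : IsCoprime (p:ℤ) (q:ℤ) :=
    Nat.isCoprime_iff_coprime.mpr ((Nat.coprime_primes hp hq).mpr hpq)
  have hSzsum : ∑ b ∈ B.filter (fun b => (p:ℤ) ∣ b ∧ (q:ℤ) ∣ b), ξ ^ b
      = ((B.filter (fun b => (p:ℤ) ∣ b ∧ (q:ℤ) ∣ b)).card : ℂ) := by
    rw [Finset.sum_congr rfl (fun b hb => ?_), Finset.sum_const, nsmul_eq_mul, mul_one]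
    rw [Finset.mem_filter] at hb
    obtain ⟨m, hm⟩ := hcop.mul_dvd hb.2.1 hb.2.2
    have : ((p * q : ℕ) : ℤ) * m = b := by push_cast; linarith [hm]
    rw [← this, zpow_mul, zpow_natCast, hξ.pow_eq_one, one_zpow]
  -- Sz card
  have hzc : ∀ k : ℤ, ¬ (r:ℤ) ∣ k →
      (B.filter fun b => ((p:ℤ) ∣ b ∧ (q:ℤ) ∣ b) ∧ b ≡ k [ZMOD (r:ℤ)]).card = z := by
    intro k hk
    rw [← hz k hk]
    congr 1
    exact Finset.filter_congr (fun b _ => by tauto)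
  have hSzcard : (B.filter (fun b => (p:ℤ) ∣ b ∧ (q:ℤ) ∣ b)).card = (r - 1) * z + t := by
    rw [← Finset.card_filter_add_card_filter_not
      (s := B.filter (fun b => (p:ℤ) ∣ b ∧ (q:ℤ) ∣ b)) (fun b => (r:ℤ) ∣ b),
      filter_filter, filter_filter]
    have h1 : (B.filter fun b => ((p:ℤ) ∣ b ∧ (q:ℤ) ∣ b) ∧ (r:ℤ) ∣ b).card = t := by
      rw [← ht]; congr 1; exact Finset.filter_congr (fun b _ => by tauto)
    rw [h1, card_filter_modclasses r hr.one_lt B _ z hzc, add_comm]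
  -- Sy sum
  have hSy : B.filter (fun b => (p:ℤ) ∣ b ∧ ¬ (q:ℤ) ∣ b)
      = B.filter (fun b => ((p:ℤ) ∣ b ∧ (r:ℤ) ∣ b) ∧ ¬ (q:ℤ) ∣ b) := by
    apply Finset.filter_congr
    intro b hb
    have := haxes b hb
    tauto
  have hyc : ∀ j : ℤ, ¬ (q:ℤ) ∣ j →
      (B.filter fun b => ((p:ℤ) ∣ b ∧ (r:ℤ) ∣ b) ∧ b ≡ j [ZMOD (q:ℤ)]).card = y := by
    intro j hj
    rw [← hy j hj]
    congr 1
    exact Finset.filter_congr (fun b _ => by tauto)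
  have hqp : ¬ q ∣ p := fun hdvd => hpq ((Nat.prime_dvd_prime_iff_eq hq hp).mp hdvd).symm
  have hξp : IsPrimitiveRoot (ξ ^ p) q := hξ.pow (Nat.pos_of_ne_zero hpq0) rfl
  have hSysum : ∑ b ∈ B.filter (fun b => (p:ℤ) ∣ b ∧ ¬ (q:ℤ) ∣ b), ξ ^ b = -(y:ℂ) := by
    rw [hSy]
    exact sum_zpow_modclasses q hq p hqp ξ hξ0 hξp B _ y (fun b hb => hb.1) hyc
  -- Sx sum
  have hSx : B.filter (fun b => ¬ (p:ℤ) ∣ b)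
      = B.filter (fun b => ((q:ℤ) ∣ b ∧ (r:ℤ) ∣ b) ∧ ¬ (p:ℤ) ∣ b) := by
    apply Finset.filter_congr
    intro b hb
    have := haxes b hb
    tauto
  have hxc : ∀ i : ℤ, ¬ (p:ℤ) ∣ i →
      (B.filter fun b => ((q:ℤ) ∣ b ∧ (r:ℤ) ∣ b) ∧ b ≡ i [ZMOD (p:ℤ)]).card = x := by
    intro i hi
    rw [← hx i hi]
    congr 1
    exact Finset.filter_congr (fun b _ => by tauto)
  have hpq' : ¬ p ∣ q := fun hdvd => hpq ((Nat.prime_dvd_prime_iff_eq hp hq).mp hdvd)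
  have hξq : IsPrimitiveRoot (ξ ^ q) p := hξ.pow (Nat.pos_of_ne_zero hpq0) (mul_comm p q)
  have hSxsum : ∑ b ∈ B.filter (fun b => ¬ (p:ℤ) ∣ b), ξ ^ b = -(x:ℂ) := by
    rw [hSx]
    exact sum_zpow_modclasses p hp q hpq' ξ hξ0 hξq B _ x (fun b hb => hb.1) hxc
  -- combine
  have h0 := hvan ξ hξ
  rw [hsplit1, hsplit2, hSzsum, hSzcard, hSysum, hSxsum] at h0
  have hnat : x + y = (r - 1) * z + t := by
    have : ((x + y : ℕ) : ℂ) = (((r - 1) * z + t : ℕ) : ℂ) := by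
      push_cast at h0 ⊢
      linear_combination -h0
    exact_mod_cast this
  have hr1 : (r - 1) * z + z = r * z := by
    obtain ⟨w', rfl⟩ : ∃ w', r = w' + 1 := ⟨r - 1, (Nat.succ_pred_eq_of_pos hr.pos).symm⟩
    simp only [Nat.add_sub_cancel]
    ring
  omega

lemma card_eq (p q r : ℕ) (hp : p.Prime) (hq : q.Prime) (hr : r.Prime)
    (hpq : p ≠ q) (hpr : p ≠ r) (hqr : q ≠ r)
    (B : Finset ℤ) (t x y z : ℕ)
    (hcard : B.card = p * q * r)
    (haxes : ∀ b ∈ B,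
      ((q : ℤ) ∣ b ∧ (r : ℤ) ∣ b) ∨ ((p : ℤ) ∣ b ∧ (r : ℤ) ∣ b) ∨ ((p : ℤ) ∣ b ∧ (q : ℤ) ∣ b))
    (ht : (B.filter (fun b => (p : ℤ) ∣ b ∧ (q : ℤ) ∣ b ∧ (r : ℤ) ∣ b)).card = t)
    (hx : ∀ i : ℤ, ¬ (p : ℤ) ∣ i →
      (B.filter (fun b => b ≡ i [ZMOD (p : ℤ)] ∧ (q : ℤ) ∣ b ∧ (r : ℤ) ∣ b)).card = x)
    (hy : ∀ j : ℤ, ¬ (q : ℤ) ∣ j →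
      (B.filter (fun b => (p : ℤ) ∣ b ∧ b ≡ j [ZMOD (q : ℤ)] ∧ (r : ℤ) ∣ b)).card = y)
    (hz : ∀ k : ℤ, ¬ (r : ℤ) ∣ k →
      (B.filter (fun b => (p : ℤ) ∣ b ∧ (q : ℤ) ∣ b ∧ b ≡ k [ZMOD (r : ℤ)])).card = z) :
    p * q * r + x + y + z = p * x + q * y + r * z + t := by
  have hsplit1 : B.card
      = (B.filter (fun b => (p:ℤ) ∣ b)).card + (B.filter (fun b => ¬ (p:ℤ) ∣ b)).card :=
    (Finset.card_filter_add_card_filter_not (fun b => (p:ℤ) ∣ b)).symm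
  have hsplit2 : (B.filter (fun b => (p:ℤ) ∣ b)).card
      = (B.filter (fun b => (p:ℤ) ∣ b ∧ (q:ℤ) ∣ b)).card
        + (B.filter (fun b => (p:ℤ) ∣ b ∧ ¬ (q:ℤ) ∣ b)).card := by
    rw [← Finset.card_filter_add_card_filter_not
      (s := B.filter (fun b => (p:ℤ) ∣ b)) (fun b => (q:ℤ) ∣ b), filter_filter, filter_filter]
  have hzc : ∀ k : ℤ, ¬ (r:ℤ) ∣ k →
      (B.filter fun b => ((p:ℤ) ∣ b ∧ (q:ℤ) ∣ b) ∧ b ≡ k [ZMOD (r:ℤ)]).card = z := by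
    intro k hk
    rw [← hz k hk]; congr 1; exact Finset.filter_congr (fun b _ => by tauto)
  have hSzcard : (B.filter (fun b => (p:ℤ) ∣ b ∧ (q:ℤ) ∣ b)).card = (r - 1) * z + t := by
    rw [← Finset.card_filter_add_card_filter_not
      (s := B.filter (fun b => (p:ℤ) ∣ b ∧ (q:ℤ) ∣ b)) (fun b => (r:ℤ) ∣ b),
      filter_filter, filter_filter]
    have h1 : (B.filter fun b => ((p:ℤ) ∣ b ∧ (q:ℤ) ∣ b) ∧ (r:ℤ) ∣ b).card = t := by
      rw [← ht]; congr 1; exact Finset.filter_congr (fun b _ => by tauto)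
    rw [h1, card_filter_modclasses r hr.one_lt B _ z hzc, add_comm]
  have hSy : B.filter (fun b => (p:ℤ) ∣ b ∧ ¬ (q:ℤ) ∣ b)
      = B.filter (fun b => ((p:ℤ) ∣ b ∧ (r:ℤ) ∣ b) ∧ ¬ (q:ℤ) ∣ b) := by
    apply Finset.filter_congr
    intro b hb
    have := haxes b hb
    tauto
  have hyc : ∀ j : ℤ, ¬ (q:ℤ) ∣ j →
      (B.filter fun b => ((p:ℤ) ∣ b ∧ (r:ℤ) ∣ b) ∧ b ≡ j [ZMOD (q:ℤ)]).card = y := by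
    intro j hj
    rw [← hy j hj]; congr 1; exact Finset.filter_congr (fun b _ => by tauto)
  have hSycard : (B.filter (fun b => (p:ℤ) ∣ b ∧ ¬ (q:ℤ) ∣ b)).card = (q - 1) * y := by
    rw [hSy]
    exact card_filter_modclasses q hq.one_lt B _ y hyc
  have hSx : B.filter (fun b => ¬ (p:ℤ) ∣ b)
      = B.filter (fun b => ((q:ℤ) ∣ b ∧ (r:ℤ) ∣ b) ∧ ¬ (p:ℤ) ∣ b) := by
    apply Finset.filter_congr
    intro b hb
    have := haxes b hb
    tauto
  have hxc : ∀ i : ℤ, ¬ (p:ℤ) ∣ i →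
      (B.filter fun b => ((q:ℤ) ∣ b ∧ (r:ℤ) ∣ b) ∧ b ≡ i [ZMOD (p:ℤ)]).card = x := by
    intro i hi
    rw [← hx i hi]; congr 1; exact Finset.filter_congr (fun b _ => by tauto)
  have hSxcard : (B.filter (fun b => ¬ (p:ℤ) ∣ b)).card = (p - 1) * x := by
    rw [hSx]
    exact card_filter_modclasses p hp.one_lt B _ x hxc
  have htotal : p * q * r = ((r - 1) * z + t) + (q - 1) * y + (p - 1) * x := by
    rw [← hcard, hsplit1, hsplit2, hSzcard, hSycard, hSxcard]
  have e1 : (p - 1) * x + x = p * x := by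
    obtain ⟨w', rfl⟩ : ∃ w', p = w' + 1 := ⟨p - 1, (Nat.succ_pred_eq_of_pos hp.pos).symm⟩
    simp only [Nat.add_sub_cancel]
    ring
  have e2 : (q - 1) * y + y = q * y := by
    obtain ⟨w', rfl⟩ : ∃ w', q = w' + 1 := ⟨q - 1, (Nat.succ_pred_eq_of_pos hq.pos).symm⟩
    simp only [Nat.add_sub_cancel]
    ring
  have e3 : (r - 1) * z + z = r * z := by
    obtain ⟨w', rfl⟩ : ∃ w', r = w' + 1 := ⟨r - 1, (Nat.succ_pred_eq_of_pos hr.pos).symm⟩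
    simp only [Nat.add_sub_cancel]
    ring
  omega

lemma arith_contra (p q r x y z t : ℕ) (hp : p.Prime) (hq : q.Prime) (hr : r.Prime)
    (hpq : p ≠ q) (hpr : p ≠ r) (hqr : q ≠ r)
    (hx0 : 1 ≤ x) (hy0 : 1 ≤ y)
    (htot : (p:ℤ) * q * r + x + y + z = p * x + q * y + r * z + t)
    (e1 : (x:ℤ) + y + z = r * z + t)
    (e2 : (x:ℤ) + y + z = p * x + t) : False := by
  have h1 : (p:ℤ) * q * r = p * x + q * y := by linear_combination htot - e1
  have h2 : (p:ℤ) * q * r = q * y + r * z := by linear_combination htot - e2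
  have h3 : p * x = r * z := by
    have : (p:ℤ) * x = r * z := by linear_combination h2 - h1
    exact_mod_cast this
  have hrx : r ∣ x := by
    have hdvd : r ∣ p * x := Dvd.intro z h3.symm
    rcases (Nat.Prime.dvd_mul hr).mp hdvd with h | h
    · exact absurd ((Nat.prime_dvd_prime_iff_eq hr hp).mp h) (fun e => hpr e.symm)
    · exact h
  obtain ⟨m, hm⟩ := hrx
  have hm1 : 1 ≤ m := by
    rcases Nat.eq_zero_or_pos m with h | h
    · subst h; simp at hm; omega
    · exact h
  have hxZ : (x:ℤ) = r * m := by exact_mod_cast hm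
  have hy' : (q:ℤ) * y = p * r * ((q:ℤ) - m) := by
    linear_combination (-1 : ℤ) * h1 - (p:ℤ) * hxZ
  have hqy : (0:ℤ) < q * y :=
    mul_pos (by exact_mod_cast hq.pos) (by exact_mod_cast hy0)
  have hpr0 : (0:ℤ) < p * r :=
    mul_pos (by exact_mod_cast hp.pos) (by exact_mod_cast hr.pos)
  have hmq : (m:ℤ) < q := by nlinarith
  have hmqn : m < q := by exact_mod_cast hmq
  have hy_nat : q * y = p * r * (q - m) := by
    zify [Nat.le_of_lt hmqn]
    linear_combination hy'
  have hq_dvd : q ∣ p * r * (q - m) := hy_nat ▸ Dvd.intro y rfl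
  rcases (Nat.Prime.dvd_mul hq).mp hq_dvd with h | h
  · rcases (Nat.Prime.dvd_mul hq).mp h with h' | h'
    · exact absurd ((Nat.prime_dvd_prime_iff_eq hq hp).mp h') (fun e => hpq e.symm)
    · exact absurd ((Nat.prime_dvd_prime_iff_eq hq hr).mp h') hqr
  · have := Nat.le_of_dvd (by omega) h
    omega

lemma card_congr' (B : Finset ℤ) (w : ℕ) (P Q : ℤ → Prop) [DecidablePred P] [DecidablePred Q]
    (hPQ : ∀ b, P b ↔ Q b) (h : (B.filter P).card = w) : (B.filter Q).card = w := by
  rw [← h]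
  congr 1
  exact Finset.filter_congr fun b _ => (hPQ b).symm

theorem stmt_14 (p q r : ℕ) (hp : p.Prime) (hq : q.Prime) (hr : r.Prime)
    (hpq : p ≠ q) (hpr : p ≠ r) (hqr : q ≠ r)
    (B : Finset ℤ) (t x y z : ℕ) (hx0 : 1 ≤ x) (hy0 : 1 ≤ y) (hz0 : 1 ≤ z)
    (hcard : B.card = p * q * r)
    (haxes : ∀ b ∈ B,
      ((q : ℤ) ∣ b ∧ (r : ℤ) ∣ b) ∨ ((p : ℤ) ∣ b ∧ (r : ℤ) ∣ b) ∨ ((p : ℤ) ∣ b ∧ (q : ℤ) ∣ b))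
    (ht : (B.filter (fun b => (p : ℤ) ∣ b ∧ (q : ℤ) ∣ b ∧ (r : ℤ) ∣ b)).card = t)
    (hx : ∀ i : ℤ, ¬ (p : ℤ) ∣ i →
      (B.filter (fun b => b ≡ i [ZMOD (p : ℤ)] ∧ (q : ℤ) ∣ b ∧ (r : ℤ) ∣ b)).card = x)
    (hy : ∀ j : ℤ, ¬ (q : ℤ) ∣ j →
      (B.filter (fun b => (p : ℤ) ∣ b ∧ b ≡ j [ZMOD (q : ℤ)] ∧ (r : ℤ) ∣ b)).card = y)
    (hz : ∀ k : ℤ, ¬ (r : ℤ) ∣ k →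
      (B.filter (fun b => (p : ℤ) ∣ b ∧ (q : ℤ) ∣ b ∧ b ≡ k [ZMOD (r : ℤ)])).card = z) :
    ¬ ((∀ ξ : ℂ, IsPrimitiveRoot ξ (p * q) → ∑ b ∈ B, ξ ^ b = 0) ∧
        (∀ ξ : ℂ, IsPrimitiveRoot ξ (q * r) → ∑ b ∈ B, ξ ^ b = 0)) ∧
      ¬ ((∀ ξ : ℂ, IsPrimitiveRoot ξ (p * q) → ∑ b ∈ B, ξ ^ b = 0) ∧
        (∀ ξ : ℂ, IsPrimitiveRoot ξ (p * r) → ∑ b ∈ B, ξ ^ b = 0)) ∧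
      ¬ ((∀ ξ : ℂ, IsPrimitiveRoot ξ (q * r) → ∑ b ∈ B, ξ ^ b = 0) ∧
        (∀ ξ : ℂ, IsPrimitiveRoot ξ (p * r) → ∑ b ∈ B, ξ ^ b = 0)) := by
  have htot := card_eq p q r hp hq hr hpq hpr hqr B t x y z hcard haxes ht hx hy hz
  have htotZ : (p:ℤ) * q * r + x + y + z = p * x + q * y + r * z + t := by exact_mod_cast htot
  -- permuted hypotheses for roles (q, r, p) with counts (y, z, x)
  have haxesA : ∀ b ∈ B,
      ((r : ℤ) ∣ b ∧ (p : ℤ) ∣ b) ∨ ((q : ℤ) ∣ b ∧ (p : ℤ) ∣ b) ∨ ((q : ℤ) ∣ b ∧ (r : ℤ) ∣ b) :=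
    fun b hb => by have := haxes b hb; tauto
  have htA : (B.filter (fun b => (q : ℤ) ∣ b ∧ (r : ℤ) ∣ b ∧ (p : ℤ) ∣ b)).card = t :=
    card_congr' B t _ _ (fun b => by tauto) ht
  have hxA : ∀ j : ℤ, ¬ (q : ℤ) ∣ j →
      (B.filter (fun b => b ≡ j [ZMOD (q : ℤ)] ∧ (r : ℤ) ∣ b ∧ (p : ℤ) ∣ b)).card = y :=
    fun j hj => card_congr' B y _ _ (fun b => by tauto) (hy j hj)
  have hyA : ∀ k : ℤ, ¬ (r : ℤ) ∣ k →
      (B.filter (fun b => (q : ℤ) ∣ b ∧ b ≡ k [ZMOD (r : ℤ)] ∧ (p : ℤ) ∣ b)).card = z :=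
    fun k hk => card_congr' B z _ _ (fun b => by tauto) (hz k hk)
  have hzA : ∀ i : ℤ, ¬ (p : ℤ) ∣ i →
      (B.filter (fun b => (q : ℤ) ∣ b ∧ (r : ℤ) ∣ b ∧ b ≡ i [ZMOD (p : ℤ)])).card = x :=
    fun i hi => card_congr' B x _ _ (fun b => by tauto) (hx i hi)
  -- permuted hypotheses for roles (p, r, q) with counts (x, z, y)
  have haxesB : ∀ b ∈ B,
      ((r : ℤ) ∣ b ∧ (q : ℤ) ∣ b) ∨ ((p : ℤ) ∣ b ∧ (q : ℤ) ∣ b) ∨ ((p : ℤ) ∣ b ∧ (r : ℤ) ∣ b) :=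
    fun b hb => by have := haxes b hb; tauto
  have htB : (B.filter (fun b => (p : ℤ) ∣ b ∧ (r : ℤ) ∣ b ∧ (q : ℤ) ∣ b)).card = t :=
    card_congr' B t _ _ (fun b => by tauto) ht
  have hxB : ∀ i : ℤ, ¬ (p : ℤ) ∣ i →
      (B.filter (fun b => b ≡ i [ZMOD (p : ℤ)] ∧ (r : ℤ) ∣ b ∧ (q : ℤ) ∣ b)).card = x :=
    fun i hi => card_congr' B x _ _ (fun b => by tauto) (hx i hi)
  have hyB : ∀ k : ℤ, ¬ (r : ℤ) ∣ k →
      (B.filter (fun b => (p : ℤ) ∣ b ∧ b ≡ k [ZMOD (r : ℤ)] ∧ (q : ℤ) ∣ b)).card = z :=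
    fun k hk => card_congr' B z _ _ (fun b => by tauto) (hz k hk)
  have hzB : ∀ j : ℤ, ¬ (q : ℤ) ∣ j →
      (B.filter (fun b => (p : ℤ) ∣ b ∧ (r : ℤ) ∣ b ∧ b ≡ j [ZMOD (q : ℤ)])).card = y :=
    fun j hj => card_congr' B y _ _ (fun b => by tauto) (hy j hj)
  refine ⟨?_, ?_, ?_⟩
  · rintro ⟨h1, h2⟩
    have e1 := key_eq p q r hp hq hr hpq hpr hqr B t x y z haxes ht hx hy hz h1
    have e2 := key_eq q r p hq hr hp hqr (Ne.symm hpq) (Ne.symm hpr) B t y z x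
      haxesA htA hxA hyA hzA h2
    have e1Z : (x:ℤ) + y + z = r * z + t := by exact_mod_cast e1
    have e2Z : (x:ℤ) + y + z = p * x + t := by
      have : ((y + z + x : ℕ) : ℤ) = ((p * x + t : ℕ) : ℤ) := by exact_mod_cast e2
      push_cast at this
      linarith
    exact arith_contra p q r x y z t hp hq hr hpq hpr hqr hx0 hy0 htotZ e1Z e2Z
  · rintro ⟨h1, h3⟩
    have e1 := key_eq p q r hp hq hr hpq hpr hqr B t x y z haxes ht hx hy hz h1
    have e3 := key_eq p r q hp hr hq hpr hpq (Ne.symm hqr) B t x z y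
      haxesB htB hxB hyB hzB h3
    have htotZ' : (q:ℤ) * p * r + y + x + z = q * y + p * x + r * z + t := by
      linear_combination htotZ
    have e1Z : (y:ℤ) + x + z = r * z + t := by
      have : ((x + y + z : ℕ) : ℤ) = ((r * z + t : ℕ) : ℤ) := by exact_mod_cast e1
      push_cast at this
      linarith
    have e2Z : (y:ℤ) + x + z = q * y + t := by
      have : ((x + z + y : ℕ) : ℤ) = ((q * y + t : ℕ) : ℤ) := by exact_mod_cast e3
      push_cast at this
      linarith
    exact arith_contra q p r y x z t hq hp hr (Ne.symm hpq) hqr hpr hy0 hx0 htotZ' e1Z e2Z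
  · rintro ⟨h2, h3⟩
    have e2 := key_eq q r p hq hr hp hqr (Ne.symm hpq) (Ne.symm hpr) B t y z x
      haxesA htA hxA hyA hzA h2
    have e3 := key_eq p r q hp hr hq hpr hpq (Ne.symm hqr) B t x z y
      haxesB htB hxB hyB hzB h3
    have htotZ'' : (q:ℤ) * r * p + y + z + x = q * y + r * z + p * x + t := by
      linear_combination htotZ
    have e1Z : (y:ℤ) + z + x = p * x + t := by
      have : ((y + z + x : ℕ) : ℤ) = ((p * x + t : ℕ) : ℤ) := by exact_mod_cast e2
      push_cast at this
      linarith
    have e2Z : (y:ℤ) + z + x = q * y + t := by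
      have : ((x + z + y : ℕ) : ℤ) = ((q * y + t : ℕ) : ℤ) := by exact_mod_cast e3
      push_cast at this
      linarith
    exact arith_contra q r p y z x t hq hr hp hqr (Ne.symm hpq) (Ne.symm hpr) hy0 hz0
      htotZ'' e1Z e2Z
end

section
/- Let N be a positive integer and for I, J ∈ {0,...,N-1} set g = gcd(I, J, N). Then ∑_{v|N} (1/φ(v)) (∑_{d | gcd(v, J, N)} d·μ(v/d)) (∑_{e | gcd(v, I, N)} e·μ(v/e)) equals N/φ(N/g) if gcd(I,N) = gcd(J,N) = g, and equals 0 otherwise. -/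
open Finset ArithmeticFunction

namespace Stmt17

/-- the multiplicative "indicator of dividing m times identity" function -/
noncomputable def G (m : ℕ) : ArithmeticFunction ℝ :=
  ⟨fun d => if d ∣ m then (d : ℝ) else 0, by simp⟩

lemma G_apply (m d : ℕ) : G m d = if d ∣ m then (d : ℝ) else 0 := rfl

lemma G_mult (m : ℕ) : (G m).IsMultiplicative := by
  constructor
  · simp [G_apply]
  · intro a b hab
    simp only [G_apply]
    rcases em (a ∣ m ∧ b ∣ m) with ⟨ha, hb⟩ | h
    · rw [if_pos ha, if_pos hb, if_pos (hab.mul_dvd_of_dvd_of_dvd ha hb)]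
      push_cast; ring
    · have hnd : ¬ a * b ∣ m := fun hd =>
        h ⟨(dvd_mul_right a b).trans hd, (dvd_mul_left b a).trans hd⟩
      rw [if_neg hnd]
      rcases not_and_or.mp h with ha | hb
      · rw [if_neg ha, zero_mul]
      · rw [if_neg hb, mul_zero]

/-- Ramanujan sum, as a divisor-sum -/
noncomputable def C (m : ℕ) : ArithmeticFunction ℝ :=
  G m * ((moebius : ArithmeticFunction ℤ) : ArithmeticFunction ℝ)

lemma C_mult (m : ℕ) : (C m).IsMultiplicative :=
  (G_mult m).mul isMultiplicative_moebius.intCast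

lemma divisors_gcd (v m : ℕ) (hv : v ≠ 0) :
    (Nat.gcd v m).divisors = v.divisors.filter (· ∣ m) := by
  ext d
  simp only [Nat.mem_divisors, mem_filter, Nat.dvd_gcd_iff]
  constructor
  · rintro ⟨⟨h1, h2⟩, -⟩; exact ⟨⟨h1, hv⟩, h2⟩
  · rintro ⟨⟨h1, -⟩, h2⟩
    exact ⟨⟨h1, h2⟩, fun h0 => hv (Nat.eq_zero_of_gcd_eq_zero_left h0)⟩

lemma C_apply (m v : ℕ) (hv : v ≠ 0) :
    C m v = ∑ d ∈ (Nat.gcd v m).divisors, (d : ℝ) * ((moebius (v / d) : ℤ) : ℝ) := by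
  rw [C, mul_apply,
    Nat.sum_divisorsAntidiagonal
      (f := fun a b => G m a * ((moebius : ArithmeticFunction ℝ) b)),
    divisors_gcd v m hv, Finset.sum_filter]
  refine Finset.sum_congr rfl fun d hd => ?_
  rw [G_apply]
  split <;> simp


noncomputable def Phi : ArithmeticFunction ℝ :=
  ⟨fun v => (Nat.totient v : ℝ), by simp⟩

lemma Phi_apply (v : ℕ) : Phi v = (Nat.totient v : ℝ) := rfl

lemma Phi_mult : Phi.IsMultiplicative := by
  constructor
  · simp [Phi_apply]
  · intro a b hab
    simp only [Phi_apply]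
    rw [Nat.totient_mul hab]; push_cast; ring

noncomputable def F (m n : ℕ) : ArithmeticFunction ℝ :=
  ((C m).pmul (C n)).pdiv Phi

lemma F_mult (m n : ℕ) : (F m n).IsMultiplicative :=
  ((C_mult m).pmul (C_mult n)).pdiv Phi_mult

noncomputable def Hf (m n : ℕ) : ArithmeticFunction ℝ :=
  ((zeta : ArithmeticFunction ℕ) : ArithmeticFunction ℝ) * F m n

lemma Hf_mult (m n : ℕ) : (Hf m n).IsMultiplicative :=
  isMultiplicative_zeta.natCast.mul (F_mult m n)

lemma Hf_apply (m n N : ℕ) : Hf m n N = ∑ v ∈ N.divisors, F m n v :=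
  coe_zeta_mul_apply

/-- closed form of `C m (p ^ j)` -/
noncomputable def pv (p β j : ℕ) : ℝ :=
  if j ≤ β then ((p ^ j).totient : ℝ)
  else if j = β + 1 then -((p : ℝ) ^ β) else 0

lemma C_prime_pow {p : ℕ} (hp : p.Prime) (m : ℕ) (hm : m ≠ 0) (j : ℕ) :
    C m (p ^ j) = pv p (m.factorization p) j := by
  set β := m.factorization p with hβ
  have hC : C m (p ^ j) = ∑ i ∈ range (j + 1),
      (if p ^ i ∣ m then ((p : ℝ) ^ i) else 0)
        * ((moebius : ArithmeticFunction ℝ) (p ^ (j - i))) := by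
    rw [C, mul_apply,
      Nat.sum_divisorsAntidiagonal
        (f := fun a b => G m a * ((moebius : ArithmeticFunction ℝ) b)),
      Nat.sum_divisors_prime_pow hp]
    refine Finset.sum_congr rfl fun i hi => ?_
    rw [mem_range] at hi
    rw [G_apply, Nat.pow_div (by omega) hp.pos]
    push_cast
    rfl
  rcases Nat.eq_zero_or_pos j with rfl | hj
  · rw [pow_zero, (C_mult m).map_one]
    simp [pv]
  have key : ∀ i ∈ range (j + 1),
      (if p ^ i ∣ m then ((p : ℝ) ^ i) else 0)
        * ((moebius : ArithmeticFunction ℝ) (p ^ (j - i)))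
      = (if i = j then (if j ≤ β then (p : ℝ) ^ j else 0) else 0)
        + (if i = j - 1 then (if j - 1 ≤ β then -((p : ℝ) ^ (j - 1)) else 0) else 0) := by
    intro i hi
    rw [mem_range] at hi
    rcases eq_or_ne i j with rfl | hij
    · rw [Nat.sub_self, pow_zero, intCoe_apply, moebius_apply_one]
      simp only [hp.pow_dvd_iff_le_factorization hm, ← hβ]
      have hne : ¬ i = i - 1 := by omega
      rw [if_pos trivial, if_neg hne, add_zero, Int.cast_one, mul_one]
    · rcases eq_or_ne i (j - 1) with rfl | hij'
      · have h1 : p ^ (j - (j - 1)) = p := by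
          rw [show j - (j - 1) = 1 by omega, pow_one]
        rw [h1, intCoe_apply, moebius_apply_prime hp]
        simp only [hp.pow_dvd_iff_le_factorization hm, ← hβ]
        rw [if_pos trivial, if_neg hij, zero_add]
        push_cast
        split_ifs <;> ring
      · have h2 : ¬ (j - i = 1) := by omega
        rw [intCoe_apply, moebius_apply_prime_pow hp (by omega), if_neg h2, Int.cast_zero,
          mul_zero, if_neg hij, if_neg hij', add_zero]
  rw [hC, Finset.sum_congr rfl key, Finset.sum_add_distrib,
    Finset.sum_ite_eq' (range (j + 1)) j, Finset.sum_ite_eq' (range (j + 1)) (j - 1),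
    if_pos (mem_range.mpr (by omega)), if_pos (mem_range.mpr (by omega))]
  by_cases hjβ : j ≤ β
  · rw [pv, if_pos hjβ, if_pos hjβ, if_pos (by omega : j - 1 ≤ β)]
    rw [Nat.totient_prime_pow hp hj]
    have h1 : (p : ℝ) ^ j = (p : ℝ) ^ (j - 1) * p := by
      conv_lhs => rw [show j = (j - 1) + 1 by omega]
      rw [pow_succ]
    push_cast [Nat.cast_sub hp.one_lt.le]
    rw [h1]; ring
  · by_cases hj1 : j = β + 1
    · rw [pv, if_neg hjβ, if_pos hj1, if_neg hjβ, if_pos (by omega : j - 1 ≤ β),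
        show j - 1 = β by omega]
      ring
    · rw [pv, if_neg hjβ, if_neg hj1, if_neg hjβ, if_neg (by omega : ¬ j - 1 ≤ β)]
      ring


lemma totient_pp_ne (p j : ℕ) (hp : p.Prime) : ((p ^ j).totient : ℝ) ≠ 0 := by
  exact_mod_cast (Nat.totient_pos.mpr (pow_pos hp.pos j)).ne'

lemma totient_pp_real {p : ℕ} (hp : p.Prime) {s : ℕ} (hs : 0 < s) :
    ((p ^ s).totient : ℝ) = (p : ℝ) ^ (s - 1) * ((p : ℝ) - 1) := by
  rw [Nat.totient_prime_pow hp hs]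
  push_cast [Nat.cast_sub hp.one_lt.le]
  ring

lemma sum_trunc {k c : ℕ} (hck : c ≤ k) (t : ℕ → ℝ) (h : ∀ j, c < j → t j = 0) :
    ∑ j ∈ range (k + 1), t j = ∑ j ∈ range (c + 1), t j := by
  refine (Finset.sum_subset (Finset.range_subset_range.mpr (by omega)) ?_).symm
  intro x hx hx'
  refine h x ?_
  simp only [mem_range] at hx hx'
  omega

lemma sum_phi_pp {p : ℕ} (hp : p.Prime) (c : ℕ) :
    ∑ j ∈ range (c + 1), ((p ^ j).totient : ℝ) = (p : ℝ) ^ c := by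
  have h2 : ∑ j ∈ range (c + 1), (p ^ j).totient = p ^ c := by
    rw [← Nat.sum_divisors_prime_pow hp]
    exact Nat.sum_totient _
  exact_mod_cast congrArg (Nat.cast : ℕ → ℝ) h2

lemma diag_term {p : ℕ} (hp : p.Prime) (α : ℕ) :
    ∀ j ∈ range (α + 1), ∀ β', α ≤ β' →
      pv p β' j * pv p α j / ((p ^ j).totient : ℝ) = ((p ^ j).totient : ℝ) := by
  intro j hj β' hβ'
  rw [mem_range] at hj
  simp only [pv]
  rw [if_pos (by omega), if_pos (by omega), mul_div_assoc,
    div_self (totient_pp_ne p j hp), mul_one]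

lemma local_ne {p : ℕ} (hp : p.Prime) {α β k : ℕ} (hαβ : α < β) (hβk : β ≤ k) :
    ∑ j ∈ range (k + 1), pv p β j * pv p α j / ((p ^ j).totient : ℝ) = 0 := by
  have htr : ∀ j, α + 1 < j → pv p β j * pv p α j / ((p ^ j).totient : ℝ) = 0 := by
    intro j hj
    have hz : pv p α j = 0 := by
      simp only [pv]; rw [if_neg (by omega), if_neg (by omega)]
    rw [hz, mul_zero, zero_div]
  rw [sum_trunc (by omega) _ htr, Finset.sum_range_succ,
    Finset.sum_congr rfl (fun j hj => diag_term hp α j hj β (by omega)), sum_phi_pp hp]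
  have h2 : pv p β (α + 1) = ((p ^ (α + 1)).totient : ℝ) := by
    simp only [pv]; rw [if_pos (by omega)]
  have h3 : pv p α (α + 1) = -((p : ℝ) ^ α) := by
    simp only [pv]; rw [if_neg (by omega), if_pos trivial]
  rw [h2, h3, mul_comm, mul_div_assoc, div_self (totient_pp_ne p (α + 1) hp), mul_one]
  ring

lemma local_eq {p : ℕ} (hp : p.Prime) {α k : ℕ} (hαk : α ≤ k) :
    ∑ j ∈ range (k + 1), pv p α j * pv p α j / ((p ^ j).totient : ℝ)
      = (p : ℝ) ^ k / ((p ^ (k - α)).totient : ℝ) := by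
  rcases eq_or_lt_of_le hαk with rfl | hlt
  · rw [Nat.sub_self, pow_zero, Nat.totient_one, Nat.cast_one, div_one,
      Finset.sum_congr rfl (fun j hj => diag_term hp α j hj α le_rfl), sum_phi_pp hp]
  · have htr : ∀ j, α + 1 < j → pv p α j * pv p α j / ((p ^ j).totient : ℝ) = 0 := by
      intro j hj
      have hz : pv p α j = 0 := by
        simp only [pv]; rw [if_neg (by omega), if_neg (by omega)]
      rw [hz, mul_zero, zero_div]
    rw [sum_trunc (by omega) _ htr, Finset.sum_range_succ,
      Finset.sum_congr rfl (fun j hj => diag_term hp α j hj α le_rfl), sum_phi_pp hp]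
    have h3 : pv p α (α + 1) = -((p : ℝ) ^ α) := by
      simp only [pv]; rw [if_neg (by omega), if_pos trivial]
    rw [h3, totient_pp_real hp (by omega : 0 < α + 1),
      totient_pp_real hp (by omega : 0 < k - α), Nat.add_sub_cancel]
    have hp0 : (p : ℝ) ≠ 0 := by exact_mod_cast hp.pos.ne'
    have hp1 : (p : ℝ) - 1 ≠ 0 := by
      have h : (1 : ℝ) < p := by exact_mod_cast hp.one_lt
      linarith
    obtain ⟨s, rfl⟩ : ∃ s, k = α + 1 + s := ⟨k - α - 1, by omega⟩
    rw [show α + 1 + s - α = s + 1 by omega, Nat.add_sub_cancel]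
    field_simp
    ring


lemma Hf_prime_pow_eq {p : ℕ} (hp : p.Prime) {m n : ℕ} (hm : m ≠ 0) (hn : n ≠ 0) (k : ℕ) :
    Hf m n (p ^ k) = ∑ j ∈ range (k + 1),
      pv p (m.factorization p) j * pv p (n.factorization p) j / ((p ^ j).totient : ℝ) := by
  rw [Hf_apply, Nat.sum_divisors_prime_pow hp]
  refine Finset.sum_congr rfl fun j hj => ?_
  rw [F, pdiv_apply, pmul_apply, C_prime_pow hp m hm, C_prime_pow hp n hn, Phi_apply]

lemma totient_div_eq_prod {N n : ℕ} (hN : N ≠ 0) (hnN : n ∣ N) :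
    (N / n).totient
      = ∏ p ∈ N.primeFactors, (p ^ (N.factorization p - n.factorization p)).totient := by
  have hn0 : n ≠ 0 := by rintro rfl; exact hN (Nat.eq_zero_of_zero_dvd hnN)
  have hd0 : N / n ≠ 0 :=
    (Nat.div_pos (Nat.le_of_dvd (Nat.pos_of_ne_zero hN) hnN) (Nat.pos_of_ne_zero hn0)).ne'
  calc (N / n).totient
      = ∏ p ∈ (N / n).primeFactors, (p ^ ((N / n).factorization p)).totient := by
        rw [Nat.multiplicative_factorization Nat.totient
          (fun x y h => Nat.totient_mul h) Nat.totient_one hd0]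
        rfl
    _ = ∏ p ∈ N.primeFactors, (p ^ ((N / n).factorization p)).totient := by
        refine Finset.prod_subset (Nat.primeFactors_mono (Nat.div_dvd_of_dvd hnN) hN) ?_
        intro p hpN hpd
        rw [← Nat.support_factorization] at hpd
        rw [Finsupp.notMem_support_iff.mp hpd, pow_zero, Nat.totient_one]
    _ = ∏ p ∈ N.primeFactors, (p ^ (N.factorization p - n.factorization p)).totient := by
        refine Finset.prod_congr rfl fun p hp => ?_
        rw [Nat.factorization_div hnN, Finsupp.tsub_apply]

end Stmt17

open Stmt17 in
theorem stmt_17 (N : ℕ) (hN : 0 < N) (I J : ℕ) (hI : I < N) (hJ : J < N) :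
    ∑ v ∈ N.divisors,
        (1 / (Nat.totient v : ℝ)) *
          (∑ d ∈ (Nat.gcd v (Nat.gcd J N)).divisors,
            (d : ℝ) * (ArithmeticFunction.moebius (v / d) : ℝ)) *
          (∑ e ∈ (Nat.gcd v (Nat.gcd I N)).divisors,
            (e : ℝ) * (ArithmeticFunction.moebius (v / e) : ℝ))
    = if Nat.gcd I N = Nat.gcd (Nat.gcd I J) N ∧ Nat.gcd J N = Nat.gcd (Nat.gcd I J) N then
        (N : ℝ) / (Nat.totient (N / Nat.gcd (Nat.gcd I J) N))
      else 0 := by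
  have hN0 : N ≠ 0 := hN.ne'
  set n := Nat.gcd I N with hn
  set m := Nat.gcd J N with hm
  have hnN : n ∣ N := Nat.gcd_dvd_right I N
  have hmN : m ∣ N := Nat.gcd_dvd_right J N
  have hn0 : n ≠ 0 := fun h => hN0 (Nat.eq_zero_of_gcd_eq_zero_right h)
  have hm0 : m ≠ 0 := fun h => hN0 (Nat.eq_zero_of_gcd_eq_zero_right h)
  have hg : Nat.gcd (Nat.gcd I J) N = Nat.gcd n m := by
    rw [hn, hm]
    refine Nat.dvd_antisymm ?_ ?_
    · exact Nat.dvd_gcd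
        (Nat.dvd_gcd ((Nat.gcd_dvd_left _ _).trans (Nat.gcd_dvd_left I J))
          (Nat.gcd_dvd_right _ _))
        (Nat.dvd_gcd ((Nat.gcd_dvd_left _ _).trans (Nat.gcd_dvd_right I J))
          (Nat.gcd_dvd_right _ _))
    · exact Nat.dvd_gcd
        (Nat.dvd_gcd ((Nat.gcd_dvd_left _ _).trans (Nat.gcd_dvd_left I N))
          ((Nat.gcd_dvd_right _ _).trans (Nat.gcd_dvd_left J N)))
        ((Nat.gcd_dvd_left _ _).trans (Nat.gcd_dvd_right I N))
  have hLHS : (∑ v ∈ N.divisors,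
      (1 / (Nat.totient v : ℝ)) *
        (∑ d ∈ (Nat.gcd v m).divisors,
          (d : ℝ) * (ArithmeticFunction.moebius (v / d) : ℝ)) *
        (∑ e ∈ (Nat.gcd v n).divisors,
          (e : ℝ) * (ArithmeticFunction.moebius (v / e) : ℝ))) = Hf m n N := by
    rw [Hf_apply]
    refine Finset.sum_congr rfl fun v hv => ?_
    have hv0 : v ≠ 0 := (Nat.pos_of_mem_divisors hv).ne'
    rw [F, pdiv_apply, pmul_apply, C_apply m v hv0, C_apply n v hv0, Phi_apply]
    ring
  rw [hLHS, hg]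
  have hfacm := (Nat.factorization_le_iff_dvd hm0 hN0).mpr hmN
  have hfacn := (Nat.factorization_le_iff_dvd hn0 hN0).mpr hnN
  by_cases hmn : m = n
  · rw [hmn, Nat.gcd_self, if_pos ⟨rfl, rfl⟩]
    rw [(Hf_mult n n).multiplicative_factorization _ hN0]
    have hstep : ∀ p ∈ N.primeFactors, Hf n n (p ^ N.factorization p)
        = (p : ℝ) ^ N.factorization p
          / ((p ^ (N.factorization p - n.factorization p)).totient : ℝ) := by
      intro p hp
      have hpp := Nat.prime_of_mem_primeFactors hp
      rw [Hf_prime_pow_eq hpp hn0 hn0, local_eq hpp (Finsupp.le_def.mp hfacn p)]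
    calc (N.factorization.prod fun p k => Hf n n (p ^ k))
        = ∏ p ∈ N.primeFactors, ((p : ℝ) ^ N.factorization p
            / ((p ^ (N.factorization p - n.factorization p)).totient : ℝ)) :=
          Finset.prod_congr rfl hstep
      _ = (∏ p ∈ N.primeFactors, (p : ℝ) ^ N.factorization p)
            / ∏ p ∈ N.primeFactors,
              ((p ^ (N.factorization p - n.factorization p)).totient : ℝ) :=
          Finset.prod_div_distrib _ _
      _ = (N : ℝ) / ((N / n).totient : ℝ) := by
          congr 1
          · have h1 : ∏ p ∈ N.primeFactors, (p : ℝ) ^ N.factorization p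
                = ((∏ p ∈ N.primeFactors, p ^ N.factorization p : ℕ) : ℝ) := by
              push_cast; rfl
            rw [h1]
            norm_cast
            exact Nat.factorization_prod_pow_eq_self hN0
          · rw [← Nat.cast_prod, ← totient_div_eq_prod hN0 hnN]
  · rw [if_neg (fun h => hmn (h.2.trans h.1.symm))]
    obtain ⟨p, hp⟩ : ∃ p, m.factorization p ≠ n.factorization p := by
      by_contra h
      push_neg at h
      exact hmn (Nat.factorization_inj hm0 hn0 (Finsupp.ext h))
    have hppr : p.Prime := by
      by_contra hnp
      rw [Nat.factorization_eq_zero_of_not_prime m hnp,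
        Nat.factorization_eq_zero_of_not_prime n hnp] at hp
      exact hp rfl
    have hpN : p ∈ N.primeFactors := by
      rw [Nat.mem_primeFactors]
      refine ⟨hppr, ?_, hN0⟩
      rcases Nat.eq_zero_or_pos (m.factorization p) with h0 | h1
      · have h1 : 1 ≤ n.factorization p := by omega
        have : p ^ 1 ∣ n := (hppr.pow_dvd_iff_le_factorization hn0).mpr h1
        rw [pow_one] at this
        exact this.trans hnN
      · have : p ^ 1 ∣ m := (hppr.pow_dvd_iff_le_factorization hm0).mpr h1
        rw [pow_one] at this
        exact this.trans hmN
    rw [(Hf_mult m n).multiplicative_factorization _ hN0]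
    refine Finset.prod_eq_zero (by rwa [Nat.support_factorization]) ?_
    show Hf m n (p ^ N.factorization p) = 0
    rw [Hf_prime_pow_eq hppr hm0 hn0]
    have hmk := Finsupp.le_def.mp hfacm p
    have hnk := Finsupp.le_def.mp hfacn p
    rcases lt_or_gt_of_ne hp with h | h
    · rw [Finset.sum_congr rfl fun j _ => by rw [mul_comm (pv p (m.factorization p) j)]]
      exact local_ne hppr h hnk
    · exact local_ne hppr h hmk
end

section
/- Let p, q, r be distinct primes with p < r, and let A be a finite set of integers equidistributed modulo p, modulo q, and modulo r. Then A cannot be contained in a set of the form [*,j,k] ∪ [i,*,k] ∪ [i,j,*] for any choice of residues i mod p, j mod q, k mod r. -/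
open Finset

theorem stmt_19 (p q r : ℕ) (hp : p.Prime) (hq : q.Prime) (hr : r.Prime)
    (hpq : p ≠ q) (hpr : p < r) (hqr : q ≠ r)
    (A : Finset ℤ) (hne : A.Nonempty)
    (hEp : ∀ i : ℤ, p * (A.filter (fun a => a ≡ i [ZMOD (p : ℤ)])).card = A.card)
    (hEq : ∀ j : ℤ, q * (A.filter (fun a => a ≡ j [ZMOD (q : ℤ)])).card = A.card)
    (hEr : ∀ k : ℤ, r * (A.filter (fun a => a ≡ k [ZMOD (r : ℤ)])).card = A.card) :
    ¬ ∃ i j k : ℤ, ∀ a ∈ A,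
        (a ≡ j [ZMOD (q : ℤ)] ∧ a ≡ k [ZMOD (r : ℤ)]) ∨
        (a ≡ i [ZMOD (p : ℤ)] ∧ a ≡ k [ZMOD (r : ℤ)]) ∨
        (a ≡ i [ZMOD (p : ℤ)] ∧ a ≡ j [ZMOD (q : ℤ)]) := by
  rintro ⟨i, j, k, h⟩
  have key : 2 * A.card ≤
      (A.filter (fun a => a ≡ i [ZMOD (p : ℤ)])).card +
      (A.filter (fun a => a ≡ j [ZMOD (q : ℤ)])).card +
      (A.filter (fun a => a ≡ k [ZMOD (r : ℤ)])).card := by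
    rw [Finset.card_filter, Finset.card_filter, Finset.card_filter,
      ← Finset.sum_add_distrib, ← Finset.sum_add_distrib]
    calc 2 * A.card = ∑ _a ∈ A, 2 := by
          rw [Finset.sum_const, smul_eq_mul, mul_comm]
      _ ≤ _ := Finset.sum_le_sum (fun a ha => by
          rcases h a ha with ⟨h1, h2⟩ | ⟨h1, h2⟩ | ⟨h1, h2⟩ <;> simp [h1, h2]
          all_goals split <;> omega)
  have hP : 2 * (A.filter (fun a => a ≡ i [ZMOD (p : ℤ)])).card ≤ A.card := by
    calc 2 * _ ≤ p * _ := Nat.mul_le_mul_right _ hp.two_le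
      _ = A.card := hEp i
  have hQ : 2 * (A.filter (fun a => a ≡ j [ZMOD (q : ℤ)])).card ≤ A.card := by
    calc 2 * _ ≤ q * _ := Nat.mul_le_mul_right _ hq.two_le
      _ = A.card := hEq j
  have hR : 2 * (A.filter (fun a => a ≡ k [ZMOD (r : ℤ)])).card ≤ A.card := by
    calc 2 * _ ≤ r * _ := Nat.mul_le_mul_right _ hr.two_le
      _ = A.card := hEr k
  have := hne.card_pos
  omega
end
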